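/- With x = Re(b₁|h|² + b₂ h̄ e^{-if}) and y = Im(b₁|h|² + b₂ h̄ e^{-if}), where h = m+i·n, m,n i.i.d. N(0,1/2), b₁ = |b₁|e^{iφ₁}, b₂ = |b₂|e^{iφ₂}, f ∈ ℝ, the covariance Cov(x,y) equals |b₁|² cos(φ₁) sin(φ₁). -/

import Mathlib

open MeasureTheory ProbabilityTheory Complex

section AuxGaussian
open Real Filter
open scoped NNReal ENNReal

lemma myInt (k : ℕ) : Integrable (fun x : ℝ => x ^ k * Real.exp (-x ^ 2)) := by
  have h := integrable_rpow_mul_exp_neg_mul_sq (b := 1) one_pos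
    (s := (k : ℝ)) (lt_of_lt_of_le (by norm_num) (Nat.cast_nonneg k))
  simpa [Real.rpow_natCast] using h

lemma myTendTop (k : ℕ) :
    Tendsto (fun x : ℝ => x ^ k * Real.exp (-x ^ 2)) atTop (nhds 0) := by
  have h := rpow_mul_exp_neg_mul_sq_isLittleO_exp_neg (b := 1) one_pos (k : ℝ)
  have h2 : Tendsto (fun x : ℝ => Real.exp (-(1/2) * x)) atTop (nhds 0) := by
    apply Real.tendsto_exp_atBot.comp
    exact Tendsto.const_mul_atTop_of_neg (by norm_num) tendsto_id
  have := h.isBigO.trans_tendsto h2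
  simpa [Real.rpow_natCast] using this

lemma myTendBot (k : ℕ) :
    Tendsto (fun x : ℝ => x ^ k * Real.exp (-x ^ 2)) atBot (nhds 0) := by
  have h := (myTendTop k).comp tendsto_neg_atBot_atTop
  have h2 := h.const_mul ((-1 : ℝ) ^ k)
  rw [mul_zero] at h2
  convert h2 using 2 with x
  simp only [Function.comp]
  rw [← mul_assoc, ← mul_pow]
  ring_nf

lemma myDeriv (k : ℕ) (x : ℝ) :
    HasDerivAt (fun x : ℝ => -(1/2) * (x ^ (k+1) * Real.exp (-x ^ 2)))
      (x ^ (k+2) * Real.exp (-x ^ 2) - (((k:ℝ)+1)/2) * (x ^ k * Real.exp (-x ^ 2))) x := by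
  have h2 : HasDerivAt (fun x : ℝ => Real.exp (-x ^ 2)) (Real.exp (-x ^ 2) * (-(2*x))) x := by
    have := ((hasDerivAt_pow 2 x).neg).exp
    simpa [mul_comm] using this
  have h1 := hasDerivAt_pow (k+1) x
  have := ((h1.mul h2).const_mul (-(1/2 : ℝ)))
  refine this.congr_deriv ?_
  simp only [Nat.add_sub_cancel]
  push_cast
  ring

lemma M_rec (k : ℕ) : ∫ x : ℝ, x ^ (k+2) * Real.exp (-x ^ 2)
    = (((k:ℝ)+1)/2) * ∫ x : ℝ, x ^ k * Real.exp (-x ^ 2) := by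
  have hint : Integrable (fun x : ℝ => x ^ (k+2) * Real.exp (-x ^ 2)
      - (((k:ℝ)+1)/2) * (x ^ k * Real.exp (-x ^ 2))) :=
    (myInt (k+2)).sub ((myInt k).const_mul _)
  have hbot := (myTendBot (k+1)).const_mul (-(1/2 : ℝ))
  have htop := (myTendTop (k+1)).const_mul (-(1/2 : ℝ))
  rw [mul_zero] at hbot htop
  have h0 := integral_of_hasDerivAt_of_tendsto (myDeriv k) hint hbot htop
  rw [sub_zero] at h0
  rw [integral_sub (myInt (k+2)) ((myInt k).const_mul _), integral_const_mul] at h0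
  linarith

lemma M0 : ∫ x : ℝ, x ^ 0 * Real.exp (-x ^ 2) = Real.sqrt π := by
  have := integral_gaussian 1
  simpa using this

lemma M1 : ∫ x : ℝ, x ^ 1 * Real.exp (-x ^ 2) = 0 := by
  have hderiv : ∀ x : ℝ, HasDerivAt (fun x : ℝ => -(1/2) * Real.exp (-x ^ 2))
      (x ^ 1 * Real.exp (-x ^ 2)) x := by
    intro x
    have h2 : HasDerivAt (fun x : ℝ => Real.exp (-x ^ 2)) (Real.exp (-x ^ 2) * (-(2*x))) x := by
      have := ((hasDerivAt_pow 2 x).neg).exp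
      simpa [mul_comm] using this
    have := h2.const_mul (-(1/2 : ℝ))
    refine this.congr_deriv ?_
    ring
  have hbot : Tendsto (fun x : ℝ => -(1/2 : ℝ) * Real.exp (-x ^ 2)) atBot (nhds 0) := by
    have := (myTendBot 0).const_mul (-(1/2 : ℝ))
    rw [mul_zero] at this
    simpa using this
  have htop : Tendsto (fun x : ℝ => -(1/2 : ℝ) * Real.exp (-x ^ 2)) atTop (nhds 0) := by
    have := (myTendTop 0).const_mul (-(1/2 : ℝ))
    rw [mul_zero] at this
    simpa using this
  have h0 := integral_of_hasDerivAt_of_tendsto hderiv (myInt 1) hbot htop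
  simpa using h0

lemma pdf_eq (x : ℝ) : gaussianPDFReal 0 (1/2) x = (Real.sqrt π)⁻¹ * Real.exp (-x ^ 2) := by
  rw [gaussianPDFReal]
  have h1 : ((1/2 : ℝ≥0) : ℝ) = 1/2 := by norm_num
  rw [h1]
  norm_num
  ring_nf
  rw [mul_right_comm, mul_inv_cancel₀ (by positivity : (Real.sqrt 2) ≠ 0), one_mul]

lemma gauss_int_eq (g : ℝ → ℝ) :
    ∫ x, g x ∂(gaussianReal 0 (1/2))
      = (Real.sqrt π)⁻¹ * ∫ x : ℝ, g x * Real.exp (-x ^ 2) := by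
  rw [gaussianReal_of_var_ne_zero 0 (by norm_num)]
  have hmeas : Measurable fun x => (gaussianPDFReal 0 (1/2) x).toNNReal :=
    (measurable_gaussianPDFReal 0 (1/2)).real_toNNReal
  have : (volume.withDensity (gaussianPDF 0 (1/2)))
      = volume.withDensity (fun x => ((gaussianPDFReal 0 (1/2) x).toNNReal : ℝ≥0∞)) := rfl
  rw [this, integral_withDensity_eq_integral_smul hmeas]
  rw [← integral_const_mul]
  congr 1 with x
  rw [NNReal.smul_def, smul_eq_mul, Real.coe_toNNReal _ (gaussianPDFReal_nonneg _ _ _), pdf_eq]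
  ring

lemma gauss_integrable (k : ℕ) :
    Integrable (fun x : ℝ => x ^ k) (gaussianReal 0 (1/2)) := by
  rw [gaussianReal_of_var_ne_zero 0 (by norm_num)]
  rw [integrable_withDensity_iff (measurable_gaussianPDF 0 (1/2))
    (Filter.Eventually.of_forall fun x => ENNReal.ofReal_lt_top)]
  have : (fun x : ℝ => x ^ k * (gaussianPDF 0 (1/2) x).toReal)
      = fun x : ℝ => (Real.sqrt π)⁻¹ * (x ^ k * Real.exp (-x ^ 2)) := by
    funext x
    rw [gaussianPDF, ENNReal.toReal_ofReal (gaussianPDFReal_nonneg _ _ _), pdf_eq]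
    ring
  rw [this]
  exact (myInt k).const_mul _

lemma mo0 : ∫ x : ℝ, x ^ 0 ∂(gaussianReal 0 (1/2)) = 1 := by simp

lemma sqrtpi_ne : (Real.sqrt π) ≠ 0 := by positivity

lemma mo1 : ∫ x : ℝ, x ^ 1 ∂(gaussianReal 0 (1/2)) = 0 := by
  rw [show (fun x : ℝ => x ^ 1) = fun x : ℝ => x ^ 1 from rfl, gauss_int_eq, M1, mul_zero]

lemma M2 : ∫ x : ℝ, x ^ 2 * Real.exp (-x ^ 2) = Real.sqrt π / 2 := by
  have h := M_rec 0
  rw [M0] at h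
  norm_num at h
  linarith

lemma M4 : ∫ x : ℝ, x ^ 4 * Real.exp (-x ^ 2) = 3 * Real.sqrt π / 4 := by
  have h := M_rec 2
  rw [M2] at h
  norm_num at h
  linarith

lemma mo2 : ∫ x : ℝ, x ^ 2 ∂(gaussianReal 0 (1/2)) = 1/2 := by
  rw [gauss_int_eq, M2]
  have := sqrtpi_ne
  field_simp

lemma mo3 : ∫ x : ℝ, x ^ 3 ∂(gaussianReal 0 (1/2)) = 0 := by
  have h := M_rec 1
  rw [M1, mul_zero] at h
  rw [gauss_int_eq]
  norm_num at h
  rw [h, mul_zero]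

lemma mo4 : ∫ x : ℝ, x ^ 4 ∂(gaussianReal 0 (1/2)) = 3/4 := by
  rw [gauss_int_eq, M4]
  have := sqrtpi_ne
  field_simp

end AuxGaussian

/-- Covariance of `x` and `y`: it equals `|b₁|² cos(φ₁) sin(φ₁)`. -/
theorem covariance_x_y
    {Ω : Type*} [MeasurableSpace Ω] (μ : Measure Ω) [IsProbabilityMeasure μ]
    (m n : Ω → ℝ) (hmeas_m : Measurable m) (hmeas_n : Measurable n)
    (hm : μ.map m = gaussianReal 0 (1 / 2)) (hn : μ.map n = gaussianReal 0 (1 / 2))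
    (hmn : IndepFun m n μ)
    (h : Ω → ℂ) (hh : ∀ ω, h ω = (m ω : ℂ) + (n ω : ℂ) * Complex.I)
    (f : ℝ) (b₁ b₂ : ℂ)
    (φ₁ φ₂ : ℝ)
    (hb₁ : b₁ = (‖b₁‖ : ℂ) * Complex.exp (φ₁ * Complex.I))
    (hb₂ : b₂ = (‖b₂‖ : ℂ) * Complex.exp (φ₂ * Complex.I))
    (x : Ω → ℝ)
    (hx : ∀ ω, x ω = (b₁ * ((‖h ω‖ : ℂ)) ^ 2
        + b₂ * (starRingEnd ℂ) (h ω) * Complex.exp (-(f : ℂ) * Complex.I)).re)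
    (y : Ω → ℝ)
    (hy : ∀ ω, y ω = (b₁ * ((‖h ω‖ : ℂ)) ^ 2
        + b₂ * (starRingEnd ℂ) (h ω) * Complex.exp (-(f : ℂ) * Complex.I)).im) :
    (∫ ω, x ω * y ω ∂μ) - (∫ ω, x ω ∂μ) * (∫ ω, y ω ∂μ)
      = ‖b₁‖ ^ 2 * Real.cos φ₁ * Real.sin φ₁ := by
  set a1 := b₁.re with ha1
  set a2 := b₁.im with ha2
  set p := (b₂ * Complex.exp (-(f : ℂ) * Complex.I)).re with hp
  set q := (b₂ * Complex.exp (-(f : ℂ) * Complex.I)).im with hq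
  -- squared modulus
  have habs : ∀ ω, ((‖h ω‖ : ℂ)) ^ 2 = ((m ω ^ 2 + n ω ^ 2 : ℝ) : ℂ) := by
    intro ω
    rw [hh ω, ← Complex.ofReal_pow, Complex.sq_norm]
    simp [Complex.normSq_apply]
    push_cast
    ring
  have hre : ∀ r : ℝ, (((r : ℂ)) ^ 2).re = r ^ 2 := fun r => by
    rw [← Complex.ofReal_pow]; exact Complex.ofReal_re _
  have him : ∀ r : ℝ, (((r : ℂ)) ^ 2).im = 0 := fun r => by
    rw [← Complex.ofReal_pow]; exact Complex.ofReal_im _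
  have hx' : ∀ ω, x ω = a1 * (m ω ^ 2 * n ω ^ 0) + (a1 * (m ω ^ 0 * n ω ^ 2)
      + (p * (m ω ^ 1 * n ω ^ 0) + q * (m ω ^ 0 * n ω ^ 1))) := by
    intro ω
    rw [hx ω, habs ω, hh ω, hp, hq, ha1]
    simp [Complex.add_re, Complex.mul_re, Complex.mul_im, Complex.add_im, hre, him]
    ring
  have hy' : ∀ ω, y ω = a2 * (m ω ^ 2 * n ω ^ 0) + (a2 * (m ω ^ 0 * n ω ^ 2)
      + (q * (m ω ^ 1 * n ω ^ 0) + -p * (m ω ^ 0 * n ω ^ 1))) := by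
    intro ω
    rw [hy ω, habs ω, hh ω, hp, hq, ha2]
    simp [Complex.add_re, Complex.mul_re, Complex.mul_im, Complex.add_im, hre, him]
    ring
  -- integrability of moments
  have intm : ∀ k : ℕ, Integrable (fun ω => m ω ^ k) μ := by
    intro k
    have h2 : Integrable (fun x : ℝ => x ^ k) (μ.map m) := by
      rw [hm]; exact gauss_integrable k
    exact (integrable_map_measure (measurable_id.pow_const k).aestronglyMeasurable
      hmeas_m.aemeasurable).1 h2
  have intn : ∀ k : ℕ, Integrable (fun ω => n ω ^ k) μ := by
    intro k
    have h2 : Integrable (fun x : ℝ => x ^ k) (μ.map n) := by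
      rw [hn]; exact gauss_integrable k
    exact (integrable_map_measure (measurable_id.pow_const k).aestronglyMeasurable
      hmeas_n.aemeasurable).1 h2
  have momm : ∀ k : ℕ, ∫ ω, m ω ^ k ∂μ = ∫ t : ℝ, t ^ k ∂(gaussianReal 0 (1/2)) := by
    intro k
    rw [← hm]
    exact (integral_map hmeas_m.aemeasurable
      (measurable_id.pow_const k).aestronglyMeasurable).symm
  have momn : ∀ k : ℕ, ∫ ω, n ω ^ k ∂μ = ∫ t : ℝ, t ^ k ∂(gaussianReal 0 (1/2)) := by
    intro k
    rw [← hn]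
    exact (integral_map hmeas_n.aemeasurable
      (measurable_id.pow_const k).aestronglyMeasurable).symm
  have hind : ∀ a b : ℕ, IndepFun (fun ω => m ω ^ a) (fun ω => n ω ^ b) μ := fun a b =>
    hmn.comp (measurable_id.pow_const a) (measurable_id.pow_const b)
  have last : ∀ (c : ℝ) (a b : ℕ),
      Integrable (fun ω => c * (m ω ^ a * n ω ^ b)) μ ∧
      ∫ ω, c * (m ω ^ a * n ω ^ b) ∂μ
        = c * ((∫ t : ℝ, t ^ a ∂(gaussianReal 0 (1/2)))
            * (∫ t : ℝ, t ^ b ∂(gaussianReal 0 (1/2)))) := by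
    intro c a b
    have hab : Integrable (fun ω => m ω ^ a * n ω ^ b) μ := by
      exact (hind a b).integrable_mul (intm a) (intn b)
    refine ⟨hab.const_mul c, ?_⟩
    rw [integral_const_mul]
    have hval : ∫ ω, m ω ^ a * n ω ^ b ∂μ = (∫ ω, m ω ^ a ∂μ) * ∫ ω, n ω ^ b ∂μ :=
      (hind a b).integral_mul_eq_mul_integral (intm a).aestronglyMeasurable (intn b).aestronglyMeasurable
    rw [hval, momm a, momn b]
  have step : ∀ (c : ℝ) (a b : ℕ) (g : Ω → ℝ), Integrable g μ →
      Integrable (fun ω => c * (m ω ^ a * n ω ^ b) + g ω) μ ∧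
      ∫ ω, (c * (m ω ^ a * n ω ^ b) + g ω) ∂μ
        = c * ((∫ t : ℝ, t ^ a ∂(gaussianReal 0 (1/2)))
            * (∫ t : ℝ, t ^ b ∂(gaussianReal 0 (1/2)))) + ∫ ω, g ω ∂μ := by
    intro c a b g hg
    refine ⟨(last c a b).1.add hg, ?_⟩
    rw [integral_add (last c a b).1 hg, (last c a b).2]
  -- E[x]
  have e4 := last q 0 1
  have e3 := step p 1 0 _ e4.1
  have e2 := step a1 0 2 _ e3.1
  have e1 := step a1 2 0 _ e2.1
  have hEx : ∫ ω, x ω ∂μ = a1 := by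
    have h0 : ∫ ω, x ω ∂μ = ∫ ω, (a1 * (m ω ^ 2 * n ω ^ 0) + (a1 * (m ω ^ 0 * n ω ^ 2)
        + (p * (m ω ^ 1 * n ω ^ 0) + q * (m ω ^ 0 * n ω ^ 1)))) ∂μ :=
      integral_congr_ae (Filter.Eventually.of_forall hx')
    rw [h0, e1.2, e2.2, e3.2, e4.2, mo0, mo1, mo2]
    ring
  -- E[y]
  have f4 := last (-p) 0 1
  have f3 := step q 1 0 _ f4.1
  have f2 := step a2 0 2 _ f3.1
  have f1 := step a2 2 0 _ f2.1
  have hEy : ∫ ω, y ω ∂μ = a2 := by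
    have h0 : ∫ ω, y ω ∂μ = ∫ ω, (a2 * (m ω ^ 2 * n ω ^ 0) + (a2 * (m ω ^ 0 * n ω ^ 2)
        + (q * (m ω ^ 1 * n ω ^ 0) + -p * (m ω ^ 0 * n ω ^ 1)))) ∂μ :=
      integral_congr_ae (Filter.Eventually.of_forall hy')
    rw [h0, f1.2, f2.2, f3.2, f4.2, mo0, mo1, mo2]
    ring
  -- E[x*y]
  have g10 := last (q ^ 2 - p ^ 2) 1 1
  have g9 := step (-(p * q)) 0 2 _ g10.1
  have g8 := step (p * q) 2 0 _ g9.1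
  have g7 := step (a2 * q - a1 * p) 0 3 _ g8.1
  have g6 := step (a2 * q - a1 * p) 2 1 _ g7.1
  have g5 := step (a1 * q + a2 * p) 1 2 _ g6.1
  have g4 := step (a1 * q + a2 * p) 3 0 _ g5.1
  have g3 := step (a1 * a2) 0 4 _ g4.1
  have g2 := step (2 * (a1 * a2)) 2 2 _ g3.1
  have g1 := step (a1 * a2) 4 0 _ g2.1
  have hExy : ∫ ω, x ω * y ω ∂μ = 2 * (a1 * a2) := by
    have hxyeq : ∀ ω, x ω * y ω
        = a1 * a2 * (m ω ^ 4 * n ω ^ 0) + (2 * (a1 * a2) * (m ω ^ 2 * n ω ^ 2)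
        + (a1 * a2 * (m ω ^ 0 * n ω ^ 4) + ((a1 * q + a2 * p) * (m ω ^ 3 * n ω ^ 0)
        + ((a1 * q + a2 * p) * (m ω ^ 1 * n ω ^ 2) + ((a2 * q - a1 * p) * (m ω ^ 2 * n ω ^ 1)
        + ((a2 * q - a1 * p) * (m ω ^ 0 * n ω ^ 3) + (p * q * (m ω ^ 2 * n ω ^ 0)
        + (-(p * q) * (m ω ^ 0 * n ω ^ 2) + (q ^ 2 - p ^ 2) * (m ω ^ 1 * n ω ^ 1))))))))) := by
      intro ω
      rw [hx' ω, hy' ω]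
      ring
    have h0 : ∫ ω, x ω * y ω ∂μ = _ :=
      integral_congr_ae (Filter.Eventually.of_forall hxyeq)
    rw [h0, g1.2, g2.2, g3.2, g4.2, g5.2, g6.2, g7.2, g8.2, g9.2, g10.2,
      mo0, mo1, mo2, mo3, mo4]
    ring
  -- conclude
  have hA1 : a1 = ‖b₁‖ * Real.cos φ₁ := by
    rw [ha1, hb₁]
    simp [Complex.mul_re, Complex.exp_ofReal_mul_I_re, Complex.exp_ofReal_mul_I_im,
      Complex.norm_exp_ofReal_mul_I, _root_.abs_of_nonneg (norm_nonneg b₁)]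
  have hA2 : a2 = ‖b₁‖ * Real.sin φ₁ := by
    rw [ha2, hb₁]
    simp [Complex.mul_im, Complex.exp_ofReal_mul_I_re, Complex.exp_ofReal_mul_I_im,
      Complex.norm_exp_ofReal_mul_I, _root_.abs_of_nonneg (norm_nonneg b₁)]
  rw [hExy, hEx, hEy, hA1, hA2]
  ring
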